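/- Let (E, C) be a finitely separated graph with a branching vertex v and suppose there exist cycles α = δγ and β = εγ based at v with γ = α ∧ β a proper initial subpath of both, such that β·α⁻¹ = εδ⁻¹ and βα are also cycles. Then v does not admit a local orientation, i.e. neither of the following holds: (1) there is X_v ∈ C_v such that every base-simple closed path at v has initial symbol in X_v⁻¹ or terminal symbol in X_v; (2) there is e_v ∈ s⁻¹(v) such that every base-simple closed path at v has initial symbol e_v or terminal symbol e_v⁻¹. -/

import Mathlib

namespace SepGraphStmt

/-- A finitely separated graph: a directed graph with a colouring of the edges
such that edges of the same colour have the same range, and each colour class is finite.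
(The colour classes with range `v` form the partition `C_v` of `r⁻¹(v)`.) -/
structure SepGraph (V E Λ : Type) where
  r : E → V
  s : E → V
  col : E → Λ
  col_range : ∀ e f, col e = col f → r e = r f
  col_finite : ∀ l : Λ, {e : E | col e = l}.Finite

variable {V E Λ : Type}

/-- A letter of the double graph: an edge together with a direction
(`true` = the edge itself, `false` = its formal inverse). -/
abbrev Letter (E : Type) := E × Bool

def src (G : SepGraph V E Λ) (a : Letter E) : V :=
  if a.2 then G.s a.1 else G.r a.1

def rng (G : SepGraph V E Λ) (a : Letter E) : V :=
  if a.2 then G.r a.1 else G.s a.1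

/-- Letter `b` may follow letter `a` in an admissible path
(words are written in application order: the first letter of a list is traversed first). -/
def ok (G : SepGraph V E Λ) (a b : Letter E) : Prop :=
  src G b = rng G a ∧
    (a.2 = false → b.2 = true → b.1 ≠ a.1) ∧
    (a.2 = true → b.2 = false → G.col b.1 ≠ G.col a.1)

def Admissible (G : SepGraph V E Λ) (w : List (Letter E)) : Prop :=
  List.Chain' (ok G) w

/-- Formal inverse of a word. -/
def wInv (w : List (Letter E)) : List (Letter E) :=
  (w.map fun a => (a.1, !a.2)).reverse

/-- The source of the (nonempty) word is `v`. -/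
def headIs (G : SepGraph V E Λ) (w : List (Letter E)) (v : V) : Prop :=
  ∀ a ∈ w.head?, src G a = v

/-- The range of the (nonempty) word is `v`. -/
def lastIs (G : SepGraph V E Λ) (w : List (Letter E)) (v : V) : Prop :=
  ∀ a ∈ w.getLast?, rng G a = v

/-- `w` is an admissible path from `u` to `v`. -/
def IsPath (G : SepGraph V E Λ) (w : List (Letter E)) (u v : V) : Prop :=
  Admissible G w ∧ (w = [] → u = v) ∧ headIs G w u ∧ lastIs G w v

/-- `w` is a closed path based at `v`. -/
def IsClosed (G : SepGraph V E Λ) (w : List (Letter E)) (v : V) : Prop :=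
  w ≠ [] ∧ Admissible G w ∧ headIs G w v ∧ lastIs G w v

/-- `w` is a cycle: a nontrivial path whose square is admissible. -/
def IsCycle (G : SepGraph V E Λ) (w : List (Letter E)) : Prop :=
  w ≠ [] ∧ Admissible G (w ++ w)

/-- `w` is a cycle based at `v`. -/
def CycleAt (G : SepGraph V E Λ) (w : List (Letter E)) (v : V) : Prop :=
  IsCycle G w ∧ headIs G w v

/-- A nontrivial admissible path `w` allows a return: some `βw` is a closed path. -/
def AllowsReturn (G : SepGraph V E Λ) (w : List (Letter E)) : Prop :=
  w ≠ [] ∧ Admissible G w ∧ ∃ b u, IsClosed G (w ++ b) u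

/-- A "returning item" at `v`: either an edge in `s⁻¹(v)` allowing a return,
or a colour class `X ∈ C_v` allowing a return. -/
def RetItem (G : SepGraph V E Λ) (v : V) : E ⊕ Λ → Prop
  | Sum.inl e => G.s e = v ∧ AllowsReturn G [(e, true)]
  | Sum.inr l => ∃ e, G.col e = l ∧ G.r e = v ∧ AllowsReturn G [(e, false)]

/-- `v` is a branching vertex. -/
def Branching (G : SepGraph V E Λ) (v : V) : Prop :=
  ∃ x y z : E ⊕ Λ, x ≠ y ∧ x ≠ z ∧ y ≠ z ∧
    RetItem G v x ∧ RetItem G v y ∧ RetItem G v z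

/-- The relation `u ⊸ v`: there is an admissible path `α : u → v` and a cycle `β`
based at `v` such that `α⁻¹βα` is admissible. -/
def Multimap (G : SepGraph V E Λ) (u v : V) : Prop :=
  ∃ α β, IsPath G α u v ∧ CycleAt G β v ∧ Admissible G (α ++ β ++ wInv α)

/-- A word is positively oriented w.r.t. an orientation `o`. -/
def Pos (o : E → Bool) (w : List (Letter E)) : Prop := ∀ a ∈ w, a.2 = o a.1

/-- A word is negatively oriented w.r.t. an orientation `o`. -/
def Neg (o : E → Bool) (w : List (Letter E)) : Prop := ∀ a ∈ w, a.2 = !o a.1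

/-- `o` is an orientation at `v` (Definition of orientation, with (2')). -/
def OrientAt (G : SepGraph V E Λ) (o : E → Bool) (v : V) : Prop :=
  ((∃ l : Λ, (∃ e, G.col e = l) ∧ (∀ e, (G.r e = v ∧ o e = false) ↔ G.col e = l)) ∧
    ∀ e, G.s e = v → o e = false) ∨
  ((∀ e, G.r e = v → o e = true) ∧
    ∀ e f, G.s e = v → G.s f = v → o e = true → o f = true → e = f)

/-- `o` is a proper orientation at `v`. -/
def ProperOrientAt (G : SepGraph V E Λ) (o : E → Bool) (v : V) : Prop :=
  ((∃ l : Λ, (∃ e, G.col e = l) ∧ (∀ e, (G.r e = v ∧ o e = false) ↔ G.col e = l)) ∧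
    ∀ e, G.s e = v → o e = false) ∨
  ((∀ e, G.r e = v → o e = true) ∧ ∃! e, G.s e = v ∧ o e = true)

/-- `w` is a base-simple closed path at `v`. -/
def BaseSimple (G : SepGraph V E Λ) (w : List (Letter E)) (v : V) : Prop :=
  IsClosed G w v ∧
    ∀ p, p ≠ [] → p.length < w.length → p <+: w → ¬ lastIs G p v



section Aux

variable {V E Λ : Type}

lemma cycleAt_closed {G : SepGraph V E Λ} {w : List (Letter E)} {v : V}
    (h : CycleAt G w v) : IsClosed G w v := by
  obtain ⟨⟨hne, hadm2⟩, hhead⟩ := h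
  have hadm : Admissible G w := hadm2.prefix (List.prefix_append w w)
  have hok := (List.isChain_append.mp hadm2).2.2
  refine ⟨hne, hadm, hhead, ?_⟩
  intro a ha
  have hb : w.head? = some (w.head hne) := List.head?_eq_head hne
  have h1 := hok a ha (w.head hne) hb
  have h2 := hhead (w.head hne) hb
  rw [h1.1] at h2
  exact h2

lemma cycleAt_seam {G : SepGraph V E Λ} {w : List (Letter E)} {v : V}
    (h : CycleAt G w v) {a b : Letter E}
    (ha : w.getLast? = some a) (hb : w.head? = some b) : ok G a b :=
  (List.isChain_append.mp h.1.2).2.2 a ha b hb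

lemma closed_disj (G : SepGraph V E Λ) (v : V) (Hd Tl : Letter E → Prop)
    (hseam : ∀ a b, Tl a → Hd b → ¬ ok G a b)
    (hbs : ∀ w, BaseSimple G w v → (∃ a, w.head? = some a ∧ Hd a) ∨
      (∃ a, w.getLast? = some a ∧ Tl a)) :
    ∀ w, IsClosed G w v → (∃ a, w.head? = some a ∧ Hd a) ∨
      (∃ a, w.getLast? = some a ∧ Tl a) := by
  classical
  have main : ∀ n (w : List (Letter E)), w.length ≤ n → IsClosed G w v →
      (∃ a, w.head? = some a ∧ Hd a) ∨ (∃ a, w.getLast? = some a ∧ Tl a) := by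
    intro n
    induction n with
    | zero =>
      intro w hw hcl
      exact absurd (List.length_eq_zero_iff.mp (Nat.le_zero.mp hw)) hcl.1
    | succ n ih =>
      intro w hlen hcl
      obtain ⟨hne, hadm, hhead, hlast⟩ := hcl
      have hwpos : 0 < w.length := List.length_pos_iff.mpr hne
      have hPw : 0 < w.length ∧ w.length ≤ w.length ∧ lastIs G (w.take w.length) v := by
        refine ⟨hwpos, le_refl _, ?_⟩
        rw [List.take_length]; exact hlast
      set P : ℕ → Prop := fun k => 0 < k ∧ k ≤ w.length ∧ lastIs G (w.take k) v with hP
      have hex : ∃ k, P k := ⟨w.length, hPw⟩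
      set n₀ := Nat.find hex with hn₀def
      obtain ⟨hn₀pos, hn₀le, hn₀last⟩ := Nat.find_spec hex
      set p := w.take n₀ with hpdef
      set r := w.drop n₀ with hrdef
      have hpr : p ++ r = w := List.take_append_drop n₀ w
      have hplen : p.length = n₀ := by
        rw [hpdef, List.length_take]; exact min_eq_left hn₀le
      have hp_ne : p ≠ [] := by
        intro h
        rw [h] at hplen
        simp at hplen
        omega
      have hheadp : p.head? = w.head? := by
        rw [hpdef, List.head?_take, if_neg (Nat.pos_iff_ne_zero.mp hn₀pos)]
      have hadm_p : Admissible G p := hadm.prefix ⟨r, hpr⟩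
      have hclp : IsClosed G p v := by
        refine ⟨hp_ne, hadm_p, ?_, hn₀last⟩
        intro a ha
        exact hhead a (hheadp ▸ ha)
      have hbsp : BaseSimple G p v := by
        refine ⟨hclp, ?_⟩
        intro q hq hlt hpre hlq
        have hqtake : q = w.take q.length :=
          List.prefix_iff_eq_take.mp (hpre.trans ⟨r, hpr⟩)
        have hlt' : q.length < n₀ := by
          rw [← hplen]; exact hlt
        refine Nat.find_min hex hlt' ⟨List.length_pos_iff.mpr hq, by omega, ?_⟩
        rw [← hqtake]; exact hlq
      by_cases hr : r = []
      · have hpw : p = w := by rw [← hpr, hr, List.append_nil]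
        rw [← hpw]
        exact hbs p hbsp
      · -- split the word
        have hadm' : List.Chain' (ok G) (p ++ r) := by rw [hpr]; exact hadm
        obtain ⟨_, hadm_r, hok⟩ := List.isChain_append.mp hadm'
        have hlp : p.getLast? = some (p.getLast hp_ne) := List.getLast?_eq_getLast hp_ne
        have hhr : r.head? = some (r.head hr) := List.head?_eq_head hr
        have hokpr : ok G (p.getLast hp_ne) (r.head hr) := hok _ hlp _ hhr
        have hrcl : IsClosed G r v := by
          refine ⟨hr, hadm_r, ?_, ?_⟩
          · intro a ha
            rw [hhr] at ha
            cases ha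
            rw [hokpr.1]
            exact hn₀last _ hlp
          · intro a ha
            apply hlast
            rw [← hpr, List.getLast?_append, ha]
            rfl
        have hrlen : r.length ≤ n := by
          rw [hrdef, List.length_drop]
          omega
        have hlastr : w.getLast? = r.getLast? := by
          rw [← hpr, List.getLast?_append]
          rw [List.getLast?_eq_getLast hr]
          rfl
        rcases hbs p hbsp with ⟨a, ha, hHa⟩ | ⟨a, ha, hTa⟩
        · left
          exact ⟨a, by rw [← hheadp]; exact ha, hHa⟩
        · rcases ih r hrlen hrcl with ⟨b, hb, hHb⟩ | ⟨b, hb, hTb⟩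
          · exfalso
            rw [hlp] at ha; cases ha
            rw [hhr] at hb; cases hb
            exact hseam _ _ hTa hHb hokpr
          · right
            exact ⟨b, by rw [hlastr]; exact hb, hTb⟩
  intro w hw
  exact main w.length w (le_refl _) hw

lemma no_orient (G : SepGraph V E Λ) (v : V) (Hd Tl : Letter E → Prop)
    (hinv : ∀ a : Letter E, Tl a ↔ Hd (a.1, !a.2))
    (hseam : ∀ a b, Tl a → Hd b → ¬ ok G a b)
    (γ δ ε : List (Letter E)) (hδ : δ ≠ []) (hε : ε ≠ [])
    (hα : CycleAt G (γ ++ δ) v) (hba : CycleAt G (wInv δ ++ ε) v)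
    (hβα : CycleAt G (γ ++ δ ++ γ ++ ε) v)
    (hbs : ∀ w, BaseSimple G w v → (∃ a, w.head? = some a ∧ Hd a) ∨
      (∃ a, w.getLast? = some a ∧ Tl a)) : False := by
  set d := δ.getLast hδ with hd
  set e := ε.getLast hε with he
  have hdδ : δ.getLast? = some d := List.getLast?_eq_getLast hδ
  have heε : ε.getLast? = some e := List.getLast?_eq_getLast hε
  have hαne : γ ++ δ ≠ [] := fun h => hδ (List.append_eq_nil_iff.mp h).2
  set a₀ := (γ ++ δ).head hαne with ha₀
  have h₀ : (γ ++ δ).head? = some a₀ := List.head?_eq_head hαne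
  -- getLast? computations
  have gα : (γ ++ δ).getLast? = some d := by
    rw [List.getLast?_append, hdδ]; rfl
  have gβα : (γ ++ δ ++ γ ++ ε).getLast? = some e := by
    rw [List.getLast?_append, heε]; rfl
  have gc : (wInv δ ++ ε).getLast? = some e := by
    rw [List.getLast?_append, heε]; rfl
  -- head? computations
  have hδh : δ.head? = some (δ.head hδ) := List.head?_eq_head hδ
  have hβαh : (γ ++ δ ++ γ ++ ε).head? = some a₀ := by
    rw [List.head?_append, List.head?_append, h₀]; rfl
  have hch : (wInv δ).head? = some (d.1, !d.2) := by
    rw [wInv, List.head?_reverse, List.getLast?_map, hdδ]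
    rfl
  have hcne : wInv δ ≠ [] := by
    intro h
    rw [h] at hch
    simp at hch
  have hch' : (wInv δ ++ ε).head? = some (d.1, !d.2) := by
    rw [List.head?_append, hch]; rfl
  have CD := closed_disj G v Hd Tl hseam hbs
  -- contradictions
  have K1 : Tl d → Hd a₀ → False := fun h1 h2 =>
    hseam d a₀ h1 h2 (cycleAt_seam hα gα h₀)
  have K2 : Tl e → Hd a₀ → False := fun h1 h2 =>
    hseam e a₀ h1 h2 (cycleAt_seam hβα gβα hβαh)
  have K3 : Tl e → Tl d → False := fun h1 h2 =>
    hseam e (d.1, !d.2) h1 ((hinv d).mp h2) (cycleAt_seam hba gc hch')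
  have Dα := CD _ (cycleAt_closed hα)
  have Dβα := CD _ (cycleAt_closed hβα)
  have Dc := CD _ (cycleAt_closed hba)
  rcases Dc with ⟨x, hx, hHx⟩ | ⟨x, hx, hTx⟩
  · -- head of wInv δ ++ ε is Hd, i.e. Tl d
    rw [hch'] at hx; cases hx
    have hTd : Tl d := (hinv d).mpr hHx
    rcases Dβα with ⟨y, hy, hHy⟩ | ⟨y, hy, hTy⟩
    · rw [hβαh] at hy; cases hy; exact K1 hTd hHy
    · rw [gβα] at hy; cases hy; exact K3 hTy hTd
  · rw [gc] at hx; cases hx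
    rcases Dα with ⟨y, hy, hHy⟩ | ⟨y, hy, hTy⟩
    · rw [h₀] at hy; cases hy; exact K2 hTx hHy
    · rw [gα] at hy; cases hy; exact K3 hTx hTy

end Aux

/-- If at a branching vertex `v` there are cycles `α = δγ`, `β = εγ`
with `γ = α ∧ β` a proper initial subpath of both such that `εδ⁻¹` and `βα` are also
cycles, then `v` admits no local orientation (neither of type (1) nor of type (2)). -/
theorem stmt19 {V E Λ : Type} (G : SepGraph V E Λ) (v : V) (hv : Branching G v)
    (γ δ ε : List (Letter E)) (hδ : δ ≠ []) (hε : ε ≠ [])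
    (hmax : δ.head? ≠ ε.head?)
    (hα : CycleAt G (γ ++ δ) v) (hβ : CycleAt G (γ ++ ε) v)
    (hba : CycleAt G (wInv δ ++ ε) v)
    (hβα : CycleAt G (γ ++ δ ++ γ ++ ε) v) :
    ¬ ((∃ X : Λ, (∃ e, G.col e = X ∧ G.r e = v) ∧
          ∀ w : List (Letter E), BaseSimple G w v →
            (∃ e, w.head? = some (e, false) ∧ G.col e = X) ∨
            (∃ e, w.getLast? = some (e, true) ∧ G.col e = X)) ∨
       (∃ ev : E, G.s ev = v ∧
          ∀ w : List (Letter E), BaseSimple G w v →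
            w.head? = some (ev, true) ∨ w.getLast? = some (ev, false))) := by
  rintro (⟨X, ⟨e0, hcol, hr⟩, hall⟩ | ⟨ev, hs, hall⟩)
  · refine no_orient G v (fun a => a.2 = false ∧ G.col a.1 = X)
      (fun a => a.2 = true ∧ G.col a.1 = X) ?_ ?_ γ δ ε hδ hε hα hba hβα ?_
    · intro a
      constructor
      · rintro ⟨h1, h2⟩; exact ⟨by simp [h1], h2⟩
      · rintro ⟨h1, h2⟩; refine ⟨?_, h2⟩; simpa using h1
    · rintro a b ⟨ha, hca⟩ ⟨hb, hcb⟩ hok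
      exact hok.2.2 ha hb (hcb.trans hca.symm)
    · intro w hw
      rcases hall w hw with ⟨f, hf, hcf⟩ | ⟨f, hf, hcf⟩
      · exact Or.inl ⟨(f, false), hf, rfl, hcf⟩
      · exact Or.inr ⟨(f, true), hf, rfl, hcf⟩
  · refine no_orient G v (fun a => a = (ev, true)) (fun a => a = (ev, false))
      ?_ ?_ γ δ ε hδ hε hα hba hβα ?_
    · intro a
      constructor
      · rintro rfl; rfl
      · intro h
        have h1 : a.1 = ev := congrArg Prod.fst h
        have h2 : (!a.2) = true := congrArg Prod.snd h
        have h3 : a.2 = false := by simpa using h2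
        exact Prod.ext h1 h3
    · rintro a b rfl rfl hok
      exact hok.2.1 rfl rfl rfl
    · intro w hw
      rcases hall w hw with hf | hf
      · exact Or.inl ⟨(ev, true), hf, rfl⟩
      · exact Or.inr ⟨(ev, false), hf, rfl⟩

end SepGraphStmt
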